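/- Let V(F,δ) = N·e^{σ²/2} + F·(e^b - e^δ) - P(F,δ)·(e^b - 1). For every F > 0 and δ ∈ ℝ, ∂V/∂δ = -F·e^δ·(1 + (e^b - 1)·Φ(-d₂)) < 0; i.e., the vault's payoff is strictly decreasing in the interest rate δ. -/

import Mathlib

open Real Set MeasureTheory

/-- Standard normal density. -/
noncomputable def stdPdf (x : ℝ) : ℝ := (Real.sqrt (2 * Real.pi))⁻¹ * Real.exp (-x ^ 2 / 2)

/-- Standard normal CDF. -/
noncomputable def stdCdf (x : ℝ) : ℝ := ∫ t in Set.Iic x, stdPdf t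

/-- Inverse of the standard normal CDF. -/
noncomputable def stdCdfInv : ℝ → ℝ := Function.invFun stdCdf

noncomputable def d1 (N F σ δ : ℝ) : ℝ := (Real.log (N / (F * Real.exp δ)) + σ ^ 2 / 2) / σ

noncomputable def d2 (N F σ δ : ℝ) : ℝ := d1 N F σ δ - σ

/-- Expected collateral shortfall P(F, δ). -/
noncomputable def Pshort (N σ F δ : ℝ) : ℝ :=
  F * Real.exp δ * stdCdf (-(d2 N F σ δ)) - N * stdCdf (-(d1 N F σ δ))

/-- Vault payoff V(F, δ). -/
noncomputable def Vval (N σ b F δ : ℝ) : ℝ :=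
  N * Real.exp (σ ^ 2 / 2) + F * (Real.exp b - Real.exp δ)
    - Pshort N σ F δ * (Real.exp b - 1)

/-- Unconstrained optimal issuance φ(δ). -/
noncomputable def phiIss (N σ b δ : ℝ) : ℝ :=
  N * Real.exp (σ * stdCdfInv ((Real.exp (b - δ) - 1) / (Real.exp b - 1)) - δ - σ ^ 2 / 2)

lemma stdPdf_nonneg (x : ℝ) : 0 ≤ stdPdf x := by
  unfold stdPdf; positivity

lemma stdPdf_neg (x : ℝ) : stdPdf (-x) = stdPdf x := by
  simp [stdPdf, neg_pow]

lemma integrable_stdPdf : Integrable stdPdf := by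
  have h := (integrable_exp_neg_mul_sq (show (0:ℝ) < 1/2 by norm_num)).const_mul
    (Real.sqrt (2 * Real.pi))⁻¹
  exact h.congr (Filter.EventuallyEq.of_eq (funext fun x => by unfold stdPdf; ring_nf))

lemma continuous_stdPdf : Continuous stdPdf := by
  unfold stdPdf; fun_prop

lemma stdCdf_nonneg (x : ℝ) : 0 ≤ stdCdf x :=
  setIntegral_nonneg measurableSet_Iic (fun t _ => stdPdf_nonneg t)

lemma hasDerivAt_stdCdf (x : ℝ) : HasDerivAt stdCdf (stdPdf x) x := by
  have hrw : stdCdf = fun y => stdCdf 0 + ∫ t in (0:ℝ)..y, stdPdf t := by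
    funext y
    rw [← intervalIntegral.integral_Iic_sub_Iic integrable_stdPdf.integrableOn
      integrable_stdPdf.integrableOn]
    unfold stdCdf; ring
  rw [hrw]
  exact (intervalIntegral.integral_hasDerivAt_right
    integrable_stdPdf.intervalIntegrable
    continuous_stdPdf.aestronglyMeasurable.stronglyMeasurableAtFilter
    continuous_stdPdf.continuousAt).const_add _

lemma key_pdf (N F σ δ : ℝ) (hN : 0 < N) (hF : 0 < F) (hσ : 0 < σ) :
    N * stdPdf (d1 N F σ δ) = F * Real.exp δ * stdPdf (d2 N F σ δ) := by
  set L := Real.log (N / (F * Real.exp δ)) with hL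
  have hσ' : σ ≠ 0 := ne_of_gt hσ
  have hd1 : d1 N F σ δ = (L + σ^2/2)/σ := rfl
  have hd2 : d2 N F σ δ = (L + σ^2/2)/σ - σ := rfl
  have hsq : (d1 N F σ δ)^2 = (d2 N F σ δ)^2 + 2*L := by
    rw [hd1, hd2]; field_simp; ring
  have hexpL : Real.exp (-L) = F * Real.exp δ / N := by
    rw [hL, ← Real.log_inv, Real.exp_log (by positivity)]
    field_simp
  have hsplit : -(d1 N F σ δ)^2/2 = -(d2 N F σ δ)^2/2 + (-L) := by
    rw [hsq]; ring
  unfold stdPdf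
  rw [hsplit, Real.exp_add, hexpL]
  field_simp

theorem stmt5 (N σ b F δ : ℝ) (hN : 0 < N) (hF : 0 < F) (hσ : 0 < σ) (hb : 0 < b) :
    HasDerivAt (fun δ' => Vval N σ b F δ')
      (-(F * Real.exp δ) * (1 + (Real.exp b - 1) * stdCdf (-(d2 N F σ δ)))) δ ∧
    -(F * Real.exp δ) * (1 + (Real.exp b - 1) * stdCdf (-(d2 N F σ δ))) < 0 := by
  have hσ' : σ ≠ 0 := ne_of_gt hσ
  have hF' : F ≠ 0 := ne_of_gt hF
  have hN' : N ≠ 0 := ne_of_gt hN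
  -- d1, d2 as affine functions of δ'
  have hd1rw : ∀ δ' : ℝ, d1 N F σ δ' = ((Real.log N - Real.log F - δ') + σ^2/2)/σ := by
    intro δ'
    unfold d1
    rw [Real.log_div hN' (by positivity), Real.log_mul hF' (Real.exp_ne_zero δ'),
      Real.log_exp]
    ring_nf
  have hd1' : HasDerivAt (fun δ' => d1 N F σ δ') (-(1/σ)) δ := by
    have h : HasDerivAt (fun δ' : ℝ => ((Real.log N - Real.log F - δ') + σ^2/2)/σ)
        (-(1/σ)) δ := by
      have h0 : HasDerivAt (fun δ' : ℝ => (Real.log N - Real.log F - δ') + σ^2/2) (-1) δ :=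
        ((hasDerivAt_id δ).const_sub (Real.log N - Real.log F)).add_const _
      have := h0.div_const σ
      simpa using this.congr_deriv (by ring)
    exact h.congr_of_eventuallyEq (Filter.Eventually.of_forall hd1rw)
  have hd2' : HasDerivAt (fun δ' => d2 N F σ δ') (-(1/σ)) δ := by
    unfold d2
    simpa using hd1'.sub_const σ
  -- CDF compositions
  have hΦ1 : HasDerivAt (fun δ' => stdCdf (-(d1 N F σ δ')))
      (stdPdf (-(d1 N F σ δ)) * (1/σ)) δ := by
    have := (hasDerivAt_stdCdf (-(d1 N F σ δ))).comp δ hd1'.neg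
    simpa [mul_comm, mul_assoc, Function.comp_def] using this
  have hΦ2 : HasDerivAt (fun δ' => stdCdf (-(d2 N F σ δ')))
      (stdPdf (-(d2 N F σ δ)) * (1/σ)) δ := by
    have := (hasDerivAt_stdCdf (-(d2 N F σ δ))).comp δ hd2'.neg
    simpa [mul_comm, mul_assoc, Function.comp_def] using this
  -- Pshort derivative
  have hE : HasDerivAt (fun δ' : ℝ => F * Real.exp δ') (F * Real.exp δ) δ := by
    simpa [mul_comm] using (Real.hasDerivAt_exp δ).const_mul F
  have hP : HasDerivAt (fun δ' => Pshort N σ F δ')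
      ((F * Real.exp δ) * stdCdf (-(d2 N F σ δ))
        + (F * Real.exp δ) * (stdPdf (-(d2 N F σ δ)) * (1/σ))
        - N * (stdPdf (-(d1 N F σ δ)) * (1/σ))) δ := by
    unfold Pshort
    exact (hE.mul hΦ2).sub (hΦ1.const_mul N)
  -- Vval derivative
  have hV : HasDerivAt (fun δ' => Vval N σ b F δ')
      (F * (-Real.exp δ)
        - ((F * Real.exp δ) * stdCdf (-(d2 N F σ δ))
          + (F * Real.exp δ) * (stdPdf (-(d2 N F σ δ)) * (1/σ))
          - N * (stdPdf (-(d1 N F σ δ)) * (1/σ))) * (Real.exp b - 1)) δ := by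
    unfold Vval
    exact (((hasDerivAt_const δ (N * Real.exp (σ ^ 2 / 2))).add
      (((Real.hasDerivAt_exp δ).const_sub (Real.exp b)).const_mul F)).sub
      (hP.mul_const (Real.exp b - 1))).congr_deriv (by ring)
  -- simplify using the pdf identity
  have hkey : N * stdPdf (-(d1 N F σ δ)) = F * Real.exp δ * stdPdf (-(d2 N F σ δ)) := by
    rw [stdPdf_neg, stdPdf_neg]
    exact key_pdf N F σ δ hN hF hσ
  have heq : F * (-Real.exp δ)
        - ((F * Real.exp δ) * stdCdf (-(d2 N F σ δ))
          + (F * Real.exp δ) * (stdPdf (-(d2 N F σ δ)) * (1/σ))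
          - N * (stdPdf (-(d1 N F σ δ)) * (1/σ))) * (Real.exp b - 1)
      = -(F * Real.exp δ) * (1 + (Real.exp b - 1) * stdCdf (-(d2 N F σ δ))) := by
    have h : N * (stdPdf (-(d1 N F σ δ)) * (1/σ))
        = (F * Real.exp δ) * (stdPdf (-(d2 N F σ δ)) * (1/σ)) := by
      rw [← mul_assoc, hkey]; ring
    rw [h]; ring
  refine ⟨heq ▸ hV, ?_⟩
  have h1 : 0 < F * Real.exp δ := by positivity
  have h2 : 0 < 1 + (Real.exp b - 1) * stdCdf (-(d2 N F σ δ)) := by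
    have hb1 : (0:ℝ) < Real.exp b - 1 := by
      have := Real.one_lt_exp_iff.mpr hb
      linarith
    nlinarith [stdCdf_nonneg (-(d2 N F σ δ))]
  nlinarith
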